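/- Let (C₁, C₂) be a CSS-T pair of binary codes of length n with C₂ ≠ {0}. Then there exists no CSS-T pair (D₁, D₂) with D₂ ≠ {0} and C₁ ⊊ D₁ if and only if for every nonzero y ∈ C₁ ∩ (C₁^{⋆2})^⊥ one has C₁⋆span{y} = C₁^⊥. -/

import Mathlib

open Finset

/-- The Euclidean dual of a binary code. -/
def dualCode {n : ℕ} (C : Submodule (ZMod 2) (Fin n → ZMod 2)) :
    Submodule (ZMod 2) (Fin n → ZMod 2) where
  carrier := {x | ∀ c ∈ C, ∑ i, x i * c i = 0}
  add_mem' := by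
    intro a b ha hb
    intro c hc
    have : ∑ i, (a + b) i * c i = ∑ i, (a i * c i + b i * c i) := by
      apply Finset.sum_congr rfl
      intro i _
      simp [add_mul]
    rw [this, Finset.sum_add_distrib, ha c hc, hb c hc, add_zero]
  zero_mem' := by
    intro c hc
    simp
  smul_mem' := by
    intro r a ha
    intro c hc
    have : ∑ i, (r • a) i * c i = r * ∑ i, a i * c i := by
      rw [Finset.mul_sum]
      apply Finset.sum_congr rfl
      intro i _
      simp [mul_assoc]
    rw [this, ha c hc, mul_zero]

/-- The (componentwise) Schur product of two binary codes. -/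
def schur {n : ℕ} (C D : Submodule (ZMod 2) (Fin n → ZMod 2)) :
    Submodule (ZMod 2) (Fin n → ZMod 2) :=
  Submodule.span (ZMod 2) {x | ∃ c ∈ C, ∃ d ∈ D, x = c * d}

/-- A pair of binary codes `(C₁, C₂)` is a CSS-T pair if `C₂ ⊆ C₁ ∩ (C₁^{⋆2})^⊥`. -/
def IsCSST {n : ℕ} (C₁ C₂ : Submodule (ZMod 2) (Fin n → ZMod 2)) : Prop :=
  C₂ ≤ C₁ ⊓ dualCode (schur C₁ C₁)


namespace CSSTAux

variable {n : ℕ}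

def bform (n : ℕ) : LinearMap.BilinForm (ZMod 2) (Fin n → ZMod 2) :=
  LinearMap.mk₂ (ZMod 2) (fun x y => ∑ i, x i * y i)
    (fun a b c => by simp [add_mul, Finset.sum_add_distrib])
    (fun r a b => by simp [Finset.mul_sum, mul_assoc])
    (fun a b c => by simp [mul_add, Finset.sum_add_distrib])
    (fun r a b => by
      simp only [smul_eq_mul, Pi.smul_apply]
      rw [Finset.mul_sum]
      exact Finset.sum_congr rfl fun i _ => by ring)

lemma bform_apply (x y : Fin n → ZMod 2) : bform n x y = ∑ i, x i * y i := rfl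

lemma bform_symm : (bform n).IsSymm := ⟨fun x y => by
  simp only [bform_apply]
  exact Finset.sum_congr rfl fun i _ => mul_comm _ _⟩

lemma bform_nondeg : (bform n).Nondegenerate := by
  refine ⟨?_, ?_⟩
  · intro x hx
    funext i
    have := hx (Pi.single i 1)
    simpa [bform_apply, Pi.single_apply, mul_ite, Finset.sum_ite_eq'] using this
  · intro x hx
    funext i
    have := hx (Pi.single i 1)
    simpa [bform_apply, Pi.single_apply, ite_mul, Finset.sum_ite_eq'] using this

lemma mem_dual {C : Submodule (ZMod 2) (Fin n → ZMod 2)} {x : Fin n → ZMod 2} :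
    x ∈ dualCode C ↔ ∀ c ∈ C, ∑ i, x i * c i = 0 := Iff.rfl

lemma dual_eq_orth (C : Submodule (ZMod 2) (Fin n → ZMod 2)) :
    dualCode C = (bform n).orthogonal C := by
  ext x
  rw [LinearMap.BilinForm.mem_orthogonal_iff, mem_dual]
  constructor
  · intro hx c hc
    exact (Finset.sum_congr rfl fun i _ => mul_comm (c i) (x i)).trans (hx c hc)
  · intro hx c hc
    exact (Finset.sum_congr rfl fun i _ => mul_comm (x i) (c i)).trans (hx c hc)

lemma dual_dual (C : Submodule (ZMod 2) (Fin n → ZMod 2)) :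
    dualCode (dualCode C) = C := by
  rw [dual_eq_orth, dual_eq_orth,
    LinearMap.BilinForm.orthogonal_orthogonal bform_nondeg bform_symm.isRefl]

lemma dual_le_dual {C D : Submodule (ZMod 2) (Fin n → ZMod 2)} (h : C ≤ D) :
    dualCode D ≤ dualCode C := fun x hx c hc => hx c (h hc)

lemma mul_mem_schur {C D : Submodule (ZMod 2) (Fin n → ZMod 2)} {c d : Fin n → ZMod 2}
    (hc : c ∈ C) (hd : d ∈ D) : c * d ∈ schur C D :=
  Submodule.subset_span ⟨c, hc, d, hd, rfl⟩

lemma schur_le {C D E : Submodule (ZMod 2) (Fin n → ZMod 2)}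
    (h : ∀ c ∈ C, ∀ d ∈ D, c * d ∈ E) : schur C D ≤ E :=
  Submodule.span_le.2 (by rintro x ⟨c, hc, d, hd, rfl⟩; exact h c hc d hd)

lemma schur_mono {C C' D D' : Submodule (ZMod 2) (Fin n → ZMod 2)}
    (h1 : C ≤ C') (h2 : D ≤ D') : schur C D ≤ schur C' D' :=
  schur_le fun c hc d hd => mul_mem_schur (h1 hc) (h2 hd)

/-- Componentwise multiplication by a fixed vector, as a linear map. -/
def mulBy (y : Fin n → ZMod 2) : (Fin n → ZMod 2) →ₗ[ZMod 2] (Fin n → ZMod 2) where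
  toFun x := x * y
  map_add' a b := by funext i; simp [add_mul]
  map_smul' r a := by funext i; simp [mul_assoc]

lemma schur_span_single (C : Submodule (ZMod 2) (Fin n → ZMod 2)) (y : Fin n → ZMod 2) :
    schur C (Submodule.span (ZMod 2) {y}) = C.map (mulBy y) := by
  apply le_antisymm
  · apply schur_le
    intro c hc d hd
    obtain ⟨t, rfl⟩ := Submodule.mem_span_singleton.mp hd
    have : c * (t • y) = mulBy y (t • c) := by
      funext i; show c i * (t * y i) = (t * c i) * y i; ring
    rw [this]
    exact ⟨t • c, C.smul_mem t hc, rfl⟩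
  · rintro x ⟨c, hc, rfl⟩
    exact mul_mem_schur hc (Submodule.mem_span_singleton_self y)

lemma mem_schur_single {C : Submodule (ZMod 2) (Fin n → ZMod 2)} {y x : Fin n → ZMod 2} :
    x ∈ schur C (Submodule.span (ZMod 2) {y}) ↔ ∃ c ∈ C, x = c * y := by
  rw [schur_span_single]
  exact ⟨fun ⟨c, hc, e⟩ => ⟨c, hc, e.symm⟩, fun ⟨c, hc, e⟩ => ⟨c, hc, e.symm⟩⟩

lemma mem_dual_singleton {y x : Fin n → ZMod 2} :
    x ∈ dualCode (Submodule.span (ZMod 2) {y}) ↔ ∑ i, y i * x i = 0 := by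
  constructor
  · intro hx
    have := hx y (Submodule.mem_span_singleton_self y)
    rw [← this]
    exact Finset.sum_congr rfl fun i _ => mul_comm _ _
  · intro hx c hc
    obtain ⟨t, rfl⟩ := Submodule.mem_span_singleton.mp hc
    have : ∑ i, x i * (t • y) i = t * ∑ i, y i * x i := by
      rw [Finset.mul_sum]
      exact Finset.sum_congr rfl fun i _ => by
        show x i * (t * y i) = t * (y i * x i); ring
    rw [this, hx, mul_zero]

lemma mem_dual_iff_le {y : Fin n → ZMod 2} {S : Submodule (ZMod 2) (Fin n → ZMod 2)} :
    y ∈ dualCode S ↔ S ≤ dualCode (Submodule.span (ZMod 2) {y}) := by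
  constructor
  · intro h s hs
    exact mem_dual_singleton.mpr (h s hs)
  · intro h c hc
    exact mem_dual_singleton.mp (h hc)

end CSSTAux

open CSSTAux in
theorem stmt_15 (n : ℕ) (C₁ C₂ : Submodule (ZMod 2) (Fin n → ZMod 2))
    (h : IsCSST C₁ C₂) (h₂ : C₂ ≠ ⊥) :
    (¬ ∃ D₁ D₂ : Submodule (ZMod 2) (Fin n → ZMod 2),
        IsCSST D₁ D₂ ∧ D₂ ≠ ⊥ ∧ C₁ < D₁)
    ↔ ∀ y ∈ C₁ ⊓ dualCode (schur C₁ C₁), y ≠ 0 →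
        schur C₁ (Submodule.span (ZMod 2) {y}) = dualCode C₁ := by
  constructor
  · -- maximality → condition
    intro hmax y hy hy0
    by_contra hne
    have hle : schur C₁ (Submodule.span (ZMod 2) {y}) ≤ dualCode C₁ := by
      rw [schur_span_single]
      rintro x ⟨c, hc, rfl⟩
      intro c' hc'
      have : ∑ i, (mulBy y c) i * c' i = ∑ i, y i * ((c * c') i) :=
        Finset.sum_congr rfl fun i _ => by
          show (c i * y i) * c' i = y i * (c i * c' i); ring
      rw [this]
      exact hy.2 _ (mul_mem_schur hc hc')
    have h1 : C₁ ≤ dualCode (schur C₁ (Submodule.span (ZMod 2) {y})) := by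
      have := dual_le_dual hle
      rwa [dual_dual] at this
    by_cases hv : dualCode (schur C₁ (Submodule.span (ZMod 2) {y})) ≤ C₁
    · refine hne ?_
      have heq := le_antisymm hv h1
      rw [← dual_dual (schur C₁ (Submodule.span (ZMod 2) {y})), heq]
    · obtain ⟨v, hvS, hvC⟩ := SetLike.not_le_iff_exists.mp hv
      refine hmax ⟨C₁ ⊔ Submodule.span (ZMod 2) {v}, Submodule.span (ZMod 2) {y}, ?_, ?_, ?_⟩
      · refine le_inf ?_ ?_ <;> rw [Submodule.span_singleton_le_iff_mem]
        · exact Submodule.mem_sup_left hy.1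
        · rw [mem_dual_iff_le]
          apply schur_le
          intro a ha b hb
          rw [mem_dual_singleton]
          obtain ⟨c, hc, m, hm, rfl⟩ := Submodule.mem_sup.mp ha
          obtain ⟨t, rfl⟩ := Submodule.mem_span_singleton.mp hm
          obtain ⟨c', hc', m', hm', rfl⟩ := Submodule.mem_sup.mp hb
          obtain ⟨u, rfl⟩ := Submodule.mem_span_singleton.mp hm'
          have hab : (c + t • v) * (c' + u • v)
              = c * c' + u • (c * v) + t • (v * c') + (t * u) • (v * v) := by
            funext i
            show (c i + t * v i) * (c' i + u * v i)
              = c i * c' i + u * (c i * v i) + t * (v i * c' i) + (t * u) * (v i * v i)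
            ring
          rw [hab]
          have key : ∀ a b : ZMod 2, a * (b * b) = b * (a * a) := by decide
          have m1 : c * c' ∈ dualCode (Submodule.span (ZMod 2) {y}) :=
            mem_dual_singleton.mpr (hy.2 _ (mul_mem_schur hc hc'))
          have m2 : c * v ∈ dualCode (Submodule.span (ZMod 2) {y}) := by
            rw [mem_dual_singleton]
            have : ∑ i, y i * ((c * v) i) = ∑ i, v i * ((c * y) i) :=
              Finset.sum_congr rfl fun i _ => by
                show y i * (c i * v i) = v i * (c i * y i); ring
            rw [this]
            exact hvS _ (mul_mem_schur hc (Submodule.mem_span_singleton_self y))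
          have m3 : v * c' ∈ dualCode (Submodule.span (ZMod 2) {y}) := by
            rw [mem_dual_singleton]
            have : ∑ i, y i * ((v * c') i) = ∑ i, v i * ((c' * y) i) :=
              Finset.sum_congr rfl fun i _ => by
                show y i * (v i * c' i) = v i * (c' i * y i); ring
            rw [this]
            exact hvS _ (mul_mem_schur hc' (Submodule.mem_span_singleton_self y))
          have m4 : v * v ∈ dualCode (Submodule.span (ZMod 2) {y}) := by
            rw [mem_dual_singleton]
            have : ∑ i, y i * ((v * v) i) = ∑ i, v i * ((y * y) i) :=
              Finset.sum_congr rfl fun i _ => key (y i) (v i)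
            rw [this]
            exact hvS _ (mul_mem_schur hy.1 (Submodule.mem_span_singleton_self y))
          have := add_mem (add_mem (add_mem m1 (Submodule.smul_mem _ u m2))
            (Submodule.smul_mem _ t m3)) (Submodule.smul_mem _ (t * u) m4)
          exact mem_dual_singleton.mp this
      · intro hbot
        exact hy0 (Submodule.span_singleton_eq_bot.mp hbot)
      · refine lt_of_le_of_ne le_sup_left fun e => hvC ?_
        rw [e]
        exact Submodule.mem_sup_right (Submodule.mem_span_singleton_self v)
  · -- condition → maximality
    intro H
    rintro ⟨D₁, D₂, hD, hD2, hlt⟩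
    have hC₁D : C₁ ≤ D₁ := le_of_lt hlt
    obtain ⟨y, hyC₂, hy0⟩ := Submodule.exists_mem_ne_zero_of_ne_bot h₂
    obtain ⟨z, hzD₂, hz0⟩ := Submodule.exists_mem_ne_zero_of_ne_bot hD2
    have hy := h hyC₂
    have hz := hD hzD₂
    have Hy := H y hy hy0
    -- Step A: z ∈ C₁
    have hzC : z ∈ C₁ := by
      rw [← dual_dual C₁, ← Hy, mem_dual_iff_le, schur_span_single]
      rintro x ⟨c, hc, rfl⟩
      rw [mem_dual_singleton]
      show ∑ i, z i * ((c * y) i) = 0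
      exact hz.2 _ (mul_mem_schur (hC₁D hc) (hC₁D hy.1))
    have hz2 : z ∈ dualCode (schur C₁ C₁) :=
      dual_le_dual (schur_mono hC₁D hC₁D) hz.2
    have Hz := H z ⟨hzC, hz2⟩ hz0
    -- Step C: D₁ ≤ C₁, contradiction
    have hDC : D₁ ≤ C₁ := by
      intro v hv
      have h1 : v * z ∈ dualCode C₁ := by
        intro c hc
        have : ∑ i, (v * z) i * c i = ∑ i, z i * ((v * c) i) :=
          Finset.sum_congr rfl fun i _ => by
            show (v i * z i) * c i = z i * (v i * c i); ring
        rw [this]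
        exact hz.2 _ (mul_mem_schur hv (hC₁D hc))
      rw [← Hz, mem_schur_single] at h1
      obtain ⟨c, hc, hcz⟩ := h1
      rw [← dual_dual C₁, ← Hz, mem_dual_iff_le, schur_span_single]
      rintro x ⟨c', hc', rfl⟩
      rw [mem_dual_singleton]
      show ∑ i, v i * ((c' * z) i) = 0
      calc ∑ i, v i * ((c' * z) i) = ∑ i, c' i * ((v * z) i) :=
            Finset.sum_congr rfl fun i _ => by
              show v i * (c' i * z i) = c' i * (v i * z i); ring
        _ = ∑ i, c' i * ((c * z) i) := by rw [hcz]
        _ = ∑ i, z i * ((c * c') i) :=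
            Finset.sum_congr rfl fun i _ => by
              show c' i * (c i * z i) = z i * (c i * c' i); ring
        _ = 0 := hz2 _ (mul_mem_schur hc hc')
    exact absurd hDC (not_le_of_gt hlt)
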